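/- Let f : ℝ → ℝ be continuous with f(x+1) = f(x) for all x, let ε ≠ 0, and consider the lifted cylinder map T_ε(x,p) = (x + p, p + ε·f(x + p)). If there exists a continuous function Γ : ℝ → ℝ with Γ(x+1) = Γ(x) for all x whose graph is invariant under T_ε, i.e. Γ(x + Γ(x)) = Γ(x) + ε·f(x + Γ(x)) for all x ∈ ℝ, then ∫₀¹ f(x) dx = 0. -/

import Mathlib

open MeasureTheory Set Function Filter


lemma keyD_aux (g h : ℝ → ℝ) (hgc : Continuous g) (hhc : Continuous h)
    (hgm : StrictMono g) (hhm : StrictMono h)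
    (hgh : ∀ y, g (h y) = y) (hhg : ∀ x, h (g x) = x)
    (hh1 : h 1 = h 0 + 1) :
    (∫ y in (0:ℝ)..1, h y) + ∫ x in (h 0)..(h 0 + 1), g x = 1 + h 0 := by
  set c := h 0 with hc
  -- the region
  set S : Set (ℝ × ℝ) := {p | p.1 ∈ Set.Ioc (0:ℝ) 1 ∧ c < p.2 ∧ p.2 ≤ h p.1} with hS
  have hSmeas : MeasurableSet S := by
    have h1 : MeasurableSet {p : ℝ × ℝ | p.1 ∈ Set.Ioc (0:ℝ) 1} :=
      measurable_fst measurableSet_Ioc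
    have h2 : MeasurableSet {p : ℝ × ℝ | c < p.2} := measurable_snd measurableSet_Ioi
    have h3 : MeasurableSet {p : ℝ × ℝ | p.2 ≤ h p.1} :=
      (isClosed_le continuous_snd (hhc.comp continuous_fst)).measurableSet
    exact (h1.inter (h2.inter h3)).congr (by ext p; simp [hS, Set.mem_setOf_eq, and_assoc])
  have hSsub : S ⊆ Set.Ioc (0:ℝ) 1 ×ˢ Set.Ioc c (c + 1) := by
    rintro ⟨y, x⟩ ⟨hy, hcx, hxh⟩
    refine ⟨hy, hcx, ?_⟩
    calc x ≤ h y := hxh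
      _ ≤ h 1 := hhm.monotone hy.2
      _ = c + 1 := hh1
  have hSfin : (volume.prod volume) S < ⊤ := by
    refine lt_of_le_of_lt (measure_mono hSsub) ?_
    rw [Measure.prod_prod, Real.volume_Ioc, Real.volume_Ioc]
    exact ENNReal.mul_lt_top ENNReal.ofReal_lt_top ENNReal.ofReal_lt_top
  set F : ℝ → ℝ → ℝ := fun y x => S.indicator (fun _ => (1:ℝ)) (y, x) with hF
  have hFint : Integrable (Function.uncurry F) (volume.prod volume) := by
    have : Function.uncurry F = S.indicator (fun _ => (1:ℝ)) := by
      ext p; cases p; rfl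
    rw [this, integrable_indicator_iff hSmeas]
    exact integrableOn_const hSfin.ne
  have swap := MeasureTheory.integral_integral_swap (f := F) hFint
  -- inner integral over x
  have hLHS : ∀ y, (∫ x, F y x) = (Set.Ioc (0:ℝ) 1).indicator (fun y => h y - c) y := by
    intro y
    by_cases hy : y ∈ Set.Ioc (0:ℝ) 1
    · have : (fun x => F y x) = (Set.Ioc c (h y)).indicator (fun _ => (1:ℝ)) := by
        funext x
        simp only [hF, Set.indicator_apply, hS, Set.mem_setOf_eq, Set.mem_Ioc, hy.1, hy.2, true_and]
      rw [this, MeasureTheory.integral_indicator_const _ measurableSet_Ioc]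
      have hcy : c ≤ h y := hhm.monotone hy.1.le
      simp [Real.volume_Ioc, ENNReal.toReal_ofReal (sub_nonneg.2 hcy),
        Set.indicator_of_mem hy, hcy]
    · have : (fun x => F y x) = fun _ => (0:ℝ) := by
        funext x
        simp only [hF, Set.indicator_apply, hS, Set.mem_setOf_eq, hy, false_and, if_false]
      rw [this, integral_zero, Set.indicator_of_notMem hy]
  -- inner integral over y
  have hRHS : ∀ x, (∫ y, F y x) = (Set.Ioc c (c + 1)).indicator (fun x => 1 - g x) x := by
    intro x
    by_cases hx : x ∈ Set.Ioc c (c + 1)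
    · have hgx0 : 0 < g x := by
        have := hgm hx.1
        rwa [hgh 0] at this
      have hgx1 : g x ≤ 1 := by
        have := hgm.monotone hx.2
        rw [← hh1, hgh 1] at this
        exact this
      have hmem : ∀ y, ((y, x) ∈ S) ↔ y ∈ Set.Icc (g x) 1 := by
        intro y
        constructor
        · rintro ⟨hy, -, hxh⟩
          refine ⟨?_, hy.2⟩
          have := hgm.monotone hxh
          rwa [hgh y] at this
        · rintro ⟨h1y, h2y⟩
          refine ⟨⟨lt_of_lt_of_le hgx0 h1y, h2y⟩, hx.1, ?_⟩
          have := hhm.monotone h1y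
          rwa [hhg x] at this
      have : (fun y => F y x) = (Set.Icc (g x) 1).indicator (fun _ => (1:ℝ)) := by
        funext y
        simp only [hF, Set.indicator_apply, hmem y]
      rw [this, MeasureTheory.integral_indicator_const _ measurableSet_Icc]
      simp [Real.volume_Icc, ENNReal.toReal_ofReal (sub_nonneg.2 hgx1),
        Set.indicator_of_mem hx, hgx1]
    · have hempty : ∀ y, (y, x) ∉ S := by
        intro y hy
        obtain ⟨hy1, hcx, hxh⟩ := hy
        apply hx
        refine ⟨hcx, ?_⟩
        calc x ≤ h y := hxh
          _ ≤ h 1 := hhm.monotone hy1.2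
          _ = c + 1 := hh1
      have : (fun y => F y x) = fun _ => (0:ℝ) := by
        funext y
        simp only [hF, Set.indicator_apply, hempty y, if_false]
      rw [this, integral_zero, Set.indicator_of_notMem hx]
  -- rewrite both sides of swap
  simp only [hLHS, hRHS] at swap
  rw [MeasureTheory.integral_indicator measurableSet_Ioc,
    MeasureTheory.integral_indicator measurableSet_Ioc] at swap
  have hc1 : c ≤ c + 1 := by linarith
  rw [← intervalIntegral.integral_of_le (by norm_num : (0:ℝ) ≤ 1),
    ← intervalIntegral.integral_of_le hc1] at swap
  have ih : IntervalIntegrable h volume 0 1 := hhc.intervalIntegrable _ _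
  have ig : IntervalIntegrable g volume c (c+1) := hgc.intervalIntegrable _ _
  rw [intervalIntegral.integral_sub ih intervalIntegrable_const] at swap
  rw [intervalIntegral.integral_sub intervalIntegrable_const ig] at swap
  simp only [intervalIntegral.integral_const, smul_eq_mul] at swap
  linarith


/-- If the lifted cylinder map `T_ε(x,p) = (x+p, p + ε f(x+p))` (with `f`
continuous and 1-periodic, `ε ≠ 0`) has a rotational invariant circle given by the graph of
a continuous 1-periodic function `Γ`, then `∫₀¹ f = 0`. -/
theorem stmt0 (f : ℝ → ℝ) (hf : Continuous f) (hfper : ∀ x, f (x + 1) = f x)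
    (ε : ℝ) (hε : ε ≠ 0)
    (Γ : ℝ → ℝ) (hΓc : Continuous Γ) (hΓper : ∀ x, Γ (x + 1) = Γ x)
    (hinv : ∀ x : ℝ, Γ (x + Γ x) = Γ x + ε * f (x + Γ x)) :
    ∫ x in (0:ℝ)..1, f x = 0 := by
  set g : ℝ → ℝ := fun x => x + Γ x with hgdef
  have hgc : Continuous g := continuous_id.add hΓc
  have hgper : ∀ x, g (x + 1) = g x + 1 := by
    intro x
    show x + 1 + Γ (x + 1) = x + Γ x + 1
    rw [hΓper]; ring
  -- injectivity of g
  have hginj : Function.Injective g := by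
    intro a b hab
    have hab' : a + Γ a = b + Γ b := hab
    have h1 := hinv a
    rw [hab'] at h1
    have h2 := hinv b
    have hΓab : Γ a = Γ b := by linarith [h1.symm.trans h2]
    linarith [hab']
  -- g is strictly monotone
  have hgm : StrictMono g := by
    rcases hgc.strictMono_of_inj hginj with hm | hm
    · exact hm
    · exfalso
      have h01 : g 1 = g 0 + 1 := by
        have := hgper 0
        rwa [zero_add] at this
      have := hm (show (0:ℝ) < 1 by norm_num)
      linarith
  -- g is surjective
  have hbdd : ∃ C : ℝ, ∀ x, |Γ x| ≤ C := by
    have hper : Function.Periodic Γ 1 := hΓper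
    have := hper.isBounded_of_continuous one_ne_zero hΓc
    obtain ⟨C, hC⟩ := (Metric.isBounded_iff_subset_closedBall 0).1 this
    exact ⟨C, fun x => by
      have := hC (Set.mem_range_self (f := Γ) x)
      simpa [Real.norm_eq_abs] using this⟩
  obtain ⟨C, hC⟩ := hbdd
  have htop : Tendsto g atTop atTop := by
    refine tendsto_atTop_mono (fun x => ?_) (tendsto_atTop_add_const_right atTop (-C) tendsto_id)
    have := (abs_le.1 (hC x)).1
    show x + -C ≤ x + Γ x
    linarith
  have hbot : Tendsto g atBot atBot := by
    refine tendsto_atBot_mono (fun x => ?_) (tendsto_atBot_add_const_right atBot C tendsto_id)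
    have := (abs_le.1 (hC x)).2
    show x + Γ x ≤ x + C
    linarith
  have hgsurj : Function.Surjective g := hgc.surjective htop hbot
  -- the inverse map
  set e : ℝ ≃o ℝ := StrictMono.orderIsoOfSurjective g hgm hgsurj with hedef
  set h : ℝ → ℝ := fun y => e.symm y with hhdef
  have hgh : ∀ y, g (h y) = y := fun y =>
    StrictMono.orderIsoOfSurjective_self_symm_apply g hgm hgsurj y
  have hhg : ∀ x, h (g x) = x := fun x =>
    StrictMono.orderIsoOfSurjective_symm_apply_self g hgm hgsurj x
  have hhc : Continuous h := e.symm.continuous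
  have hhm : StrictMono h := e.symm.strictMono
  have hh1 : h 1 = h 0 + 1 := by
    apply hginj
    rw [hgh, hgper, hgh]
    norm_num
  -- pointwise identity
  have hkey : ∀ y, ε * f y = g y + h y - 2 * y := by
    intro y
    have h1 := hinv (h y)
    rw [show h y + Γ (h y) = y from hgh y] at h1
    have e1 : g y = y + Γ y := rfl
    have e2 : y = h y + Γ (h y) := (hgh y).symm
    linarith
  -- integral identity
  have hg01 : IntervalIntegrable g volume 0 1 := hgc.intervalIntegrable _ _
  have hh01 : IntervalIntegrable h volume 0 1 := hhc.intervalIntegrable _ _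
  have hint : ε * ∫ x in (0:ℝ)..1, f x =
      (∫ y in (0:ℝ)..1, g y) + (∫ y in (0:ℝ)..1, h y) - 1 := by
    rw [← intervalIntegral.integral_const_mul]
    rw [intervalIntegral.integral_congr (g := fun y => g y + h y - 2 * y)
      (fun y _ => hkey y)]
    rw [intervalIntegral.integral_sub (hg01.add hh01)
      (by apply Continuous.intervalIntegrable; continuity)]
    rw [intervalIntegral.integral_add hg01 hh01]
    have h2y : ∫ y in (0:ℝ)..1, 2 * y = 1 := by
      rw [intervalIntegral.integral_const_mul, integral_id]
      norm_num
    rw [h2y]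
  -- shift the integral of g using periodicity of g - id
  have hper2 : Function.Periodic (fun x => g x - x) 1 := by
    intro x
    show g (x + 1) - (x + 1) = g x - x
    rw [hgper x]; ring
  have hshift : ∫ x in (h 0)..(h 0 + 1), (g x - x) = ∫ x in (0:ℝ)..1, (g x - x) := by
    simpa using hper2.intervalIntegral_add_eq (h 0) 0
  have hgc01 : IntervalIntegrable g volume (h 0) (h 0 + 1) := hgc.intervalIntegrable _ _
  have hid1 : IntervalIntegrable (fun x : ℝ => x) volume (h 0) (h 0 + 1) :=
    (continuous_id).intervalIntegrable _ _
  have hid2 : IntervalIntegrable (fun x : ℝ => x) volume 0 1 :=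
    (continuous_id).intervalIntegrable _ _
  rw [intervalIntegral.integral_sub hgc01 hid1, intervalIntegral.integral_sub hg01 hid2,
    integral_id, integral_id] at hshift
  -- combine
  have hD := keyD_aux g h hgc hhc hgm hhm hgh hhg hh1
  have hsum : (∫ y in (0:ℝ)..1, g y) + (∫ y in (0:ℝ)..1, h y) = 1 := by nlinarith [hshift, hD]
  rw [hsum] at hint
  have : ε * ∫ x in (0:ℝ)..1, f x = 0 := by linarith
  exact (mul_eq_zero.1 this).resolve_left hε
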